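/- Let G be as in the resampling setting, fix g₀ and a partial function h₀, and let R_{g₀,τ,h₀} be the set of pairs (H,s) with H extending h₀ such that G(H,s) = (g₀,τ). Then for any transcript τ consistent with h₀ and any two total functions H₀, H₁ both extending h₀ ∪ τ, the uniform distribution on oracle-seed pairs conditioned on R_{g₀,τ,h₀} assigns equal probability to the events {first coordinate = H₀} and {first coordinate = H₁}. -/
import Mathlib

open scoped Classical

/-- `Extends H h` : the total function `H` agrees with the partial function
`h` wherever `h` is defined. -/
def Extends {X Y : Type*} (H : X → Y) (h : X → Option Y) : Prop :=
  ∀ x y, h x = some y → H x = y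

/-- The uniform distribution on oracle-seed pairs conditioned on the relation
R_{g₀,τ,h₀} assigns equal probability to any two oracles extending h₀ ∪ τ:
equivalently, the sets of seeds pairing with them in the relation have equal
cardinality. -/
theorem stmt_5 {X Y S O : Type*} [Fintype S]
    (G : (X → Y) → S → O × (X → Option Y))
    (hloc : ∀ (H₀ H₁ : X → Y) (s : S),
      (∀ x, (G H₀ s).2 x ≠ none → H₁ x = H₀ x) → G H₁ s = G H₀ s)
    (g₀ : O) (τ h₀ : X → Option Y)
    (hcons : ∀ x y y', h₀ x = some y → τ x = some y' → y = y')
    (H₀ H₁ : X → Y)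
    (hH₀ : Extends H₀ h₀ ∧ Extends H₀ τ) (hH₁ : Extends H₁ h₀ ∧ Extends H₁ τ) :
    (Finset.univ.filter (fun s : S => Extends H₀ h₀ ∧ G H₀ s = (g₀, τ))).card =
      (Finset.univ.filter (fun s : S => Extends H₁ h₀ ∧ G H₁ s = (g₀, τ))).card := by
  have key : ∀ (A B : X → Y), Extends A τ → Extends B τ → ∀ s : S,
      G A s = (g₀, τ) → G B s = (g₀, τ) := by
    intro A B hA hB s hAs
    have : G B s = G A s := by
      apply hloc A B s
      intro x hx
      rw [hAs] at hx
      simp only at hx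
      obtain ⟨y, hy⟩ := Option.ne_none_iff_exists'.mp hx
      rw [hA x y hy, hB x y hy]
    rw [this, hAs]
  congr 1
  apply Finset.filter_congr
  intro s _
  constructor
  · rintro ⟨-, h⟩; exact ⟨hH₁.1, key H₀ H₁ hH₀.2 hH₁.2 s h⟩
  · rintro ⟨-, h⟩; exact ⟨hH₀.1, key H₁ H₀ hH₁.2 hH₀.2 s h⟩
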